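/- arXiv:1708.08675 — 3 statements merged into one kernel-verified Lean document; each statement's English description precedes it below -/
import Mathlib

section
/- Comparison theorem for perturbed forward integral equations. Let g be a Carathéodory driver with Lipschitz constant C, let f : ℝ → ℝ be bounded and measurable, and let A : ℝ → ℝ be nondecreasing on [0, T] with A 0 = 0. Let x, y ∈ ℝ with x ≥ y. Let V be a solution of the forward integral equation with data (x, g, f), and let Y : ℝ → ℝ be bounded and measurable with Y t = y − (∫ s in [0, t], g s (Y s) ds) + f t − A t for every t ∈ [0, T]. Then Y t ≤ V t for every t ∈ [0, T]. -/
open MeasureTheory Set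

/-- A bounded measurable real function. -/
def BddMeas (f : ℝ → ℝ) : Prop :=
  Measurable f ∧ ∃ M : ℝ, ∀ t : ℝ, |f t| ≤ M

/-- A Carathéodory driver with Lipschitz constant `C` on `[0, T]`. -/
def CaratheodoryDriver (T C : ℝ) (g : ℝ → ℝ → ℝ) : Prop :=
  Measurable (Function.uncurry g) ∧
  IntegrableOn (fun s => g s 0) (Icc 0 T) ∧
  ∀ s ∈ Icc (0 : ℝ) T, ∀ y₁ y₂ : ℝ, |g s y₁ - g s y₂| ≤ C * |y₁ - y₂|

/-- A solution of the forward integral equation with data `(x, g, f)`: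
a bounded measurable `V` with `V t = x - ∫_{[0,t]} g s (V s) ds + f t` on `[0, T]`. -/
def IsFwdSolution (T : ℝ) (g : ℝ → ℝ → ℝ) (x : ℝ) (f V : ℝ → ℝ) : Prop :=
  BddMeas V ∧
  ∀ t ∈ Icc (0 : ℝ) T, V t = x - (∫ s in Icc (0 : ℝ) t, g s (V s)) + f t

/-- bounded measurable functions are integrable on compact intervals -/
lemma aux_integrableOn_of_bdd {u : ℝ → ℝ} {a b M : ℝ} (hm : Measurable u)
    (hb : ∀ s ∈ Icc a b, |u s| ≤ M) : IntegrableOn u (Icc a b) := by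
  refine Integrable.mono' (g := fun _ => M)
    (integrableOn_const measure_Icc_lt_top.ne)
    hm.aestronglyMeasurable.restrict ?_
  rw [ae_restrict_iff' measurableSet_Icc]
  exact ae_of_all _ fun s hs => hb s hs

/-- Grönwall-type iteration lemma. -/
lemma aux_gronwall (T C M : ℝ) (hC : 0 ≤ C) (hM : 0 ≤ M) (φ : ℝ → ℝ)
    (hφm : Measurable φ) (hφ0 : ∀ s, 0 ≤ φ s) (hφb : ∀ s, φ s ≤ M)
    (key : ∀ t ∈ Icc (0 : ℝ) T, φ t ≤ C * ∫ s in Icc (0 : ℝ) t, φ s) :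
    ∀ t ∈ Icc (0 : ℝ) T, φ t ≤ 0 := by
  have habs : ∀ s, |φ s| ≤ M := fun s => abs_le.mpr ⟨by linarith [hφ0 s, hM], hφb s⟩
  have hbound : ∀ n : ℕ, ∀ t ∈ Icc (0 : ℝ) T, φ t ≤ M * (C * t) ^ n / n.factorial := by
    intro n
    induction n with
    | zero => intro t ht; simpa using hφb t
    | succ n ih =>
      intro t ht
      have ht0 : (0:ℝ) ≤ t := ht.1
      have hφint : IntegrableOn φ (Icc 0 t) :=
        aux_integrableOn_of_bdd hφm (fun s _ => habs s)
      have hpint : IntegrableOn (fun s => M * C ^ n / n.factorial * s ^ n) (Icc (0:ℝ) t) :=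
        (Continuous.integrableOn_Icc (by continuity))
      have hmono : (∫ s in Icc (0:ℝ) t, φ s)
          ≤ ∫ s in Icc (0:ℝ) t, M * C ^ n / n.factorial * s ^ n := by
        refine setIntegral_mono_on hφint hpint measurableSet_Icc ?_
        intro s hs
        have hs' : s ∈ Icc (0:ℝ) T := ⟨hs.1, hs.2.trans ht.2⟩
        have := ih s hs'
        calc φ s ≤ M * (C * s) ^ n / n.factorial := this
          _ = M * C ^ n / n.factorial * s ^ n := by rw [mul_pow]; ring
      have hval : (∫ s in Icc (0:ℝ) t, M * C ^ n / n.factorial * s ^ n)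
          = M * C ^ n / n.factorial * (t ^ (n+1) / (n+1)) := by
        rw [integral_const_mul, integral_Icc_eq_integral_Ioc,
          ← intervalIntegral.integral_of_le ht0, integral_pow]
        norm_num
      have hfac : ((n+1).factorial : ℝ) = (n+1) * n.factorial := by
        rw [Nat.factorial_succ]; push_cast; ring
      have hn1 : ((n:ℝ)+1) ≠ 0 := by positivity
      have hnf : ((n.factorial : ℝ)) ≠ 0 := by
        exact_mod_cast (Nat.factorial_pos n).ne'
      calc φ t ≤ C * ∫ s in Icc (0:ℝ) t, φ s := key t ht
        _ ≤ C * (M * C ^ n / n.factorial * (t ^ (n+1) / (n+1))) := by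
            rw [← hval]; exact mul_le_mul_of_nonneg_left hmono hC
        _ = M * (C * t) ^ (n+1) / (n+1).factorial := by
            rw [hfac, mul_pow]; push_cast; field_simp; ring
  intro t ht
  have htend : Filter.Tendsto (fun n : ℕ => M * (C * t) ^ n / n.factorial)
      Filter.atTop (nhds 0) := by
    have h1 := FloorSemiring.tendsto_pow_div_factorial_atTop (K := ℝ) (C * t)
    have h2 := h1.const_mul M
    simpa [mul_div_assoc] using h2
  exact ge_of_tendsto' htend (fun n => hbound n t ht)

/-- Comparison theorem for perturbed forward integral equations. -/
theorem forward_eq_comparison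
    (T C : ℝ) (hT : 0 < T) (hC : 0 ≤ C)
    (g : ℝ → ℝ → ℝ) (hg : CaratheodoryDriver T C g)
    (f : ℝ → ℝ) (hf : BddMeas f)
    (A : ℝ → ℝ) (hA : MonotoneOn A (Icc 0 T)) (hA0 : A 0 = 0)
    (x y : ℝ) (hxy : y ≤ x)
    (V : ℝ → ℝ) (hV : IsFwdSolution T g x f V)
    (Y : ℝ → ℝ) (hY : BddMeas Y)
    (hYeq : ∀ t ∈ Icc (0 : ℝ) T,
      Y t = y - (∫ s in Icc (0 : ℝ) t, g s (Y s)) + f t - A t) :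
    ∀ t ∈ Icc (0 : ℝ) T, Y t ≤ V t := by
  obtain ⟨hgm, hgint, hglip⟩ := hg
  obtain ⟨⟨hVm, MV, hMV⟩, hVeq⟩ := hV
  obtain ⟨hYm, MY, hMY⟩ := hY
  set D : ℝ → ℝ := fun t => Y t - V t with hD
  set h : ℝ → ℝ := fun s => g s (Y s) - g s (V s) with hh
  set φ : ℝ → ℝ := fun s => max (D s) 0 with hφ
  have hMY0 : 0 ≤ MY := le_trans (abs_nonneg _) (hMY 0)
  have hMV0 : 0 ≤ MV := le_trans (abs_nonneg _) (hMV 0)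
  set K : ℝ := C * (MY + MV) with hK
  have hK0 : 0 ≤ K := mul_nonneg hC (by linarith)
  -- measurability
  have hgYm : Measurable fun s => g s (Y s) := hgm.comp (measurable_id.prodMk hYm)
  have hgVm : Measurable fun s => g s (V s) := hgm.comp (measurable_id.prodMk hVm)
  have hhm : Measurable h := hgYm.sub hgVm
  have hDm : Measurable D := hYm.sub hVm
  have hφm : Measurable φ := hDm.max measurable_const
  -- integrability of g s (Y s) and g s (V s) on Icc 0 T
  have hbig : ∀ (W : ℝ → ℝ) (MW : ℝ), Measurable W → (∀ t, |W t| ≤ MW) →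
      IntegrableOn (fun s => g s (W s)) (Icc 0 T) := by
    intro W MW hWm hMW
    refine Integrable.mono' (g := fun s => |g s 0| + C * MW)
      (hgint.abs.add (integrableOn_const measure_Icc_lt_top.ne))
      ((hgm.comp (measurable_id.prodMk hWm)).aestronglyMeasurable.restrict) ?_
    rw [ae_restrict_iff' measurableSet_Icc]
    refine ae_of_all _ fun s hs => ?_
    have h1 : |g s (W s) - g s 0| ≤ C * |W s - 0| := hglip s hs (W s) 0
    have h2 : |g s (W s)| ≤ |g s (W s) - g s 0| + |g s 0| := by
      calc |g s (W s)| = |g s (W s) - g s 0 + g s 0| := by ring_nf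
        _ ≤ |g s (W s) - g s 0| + |g s 0| := abs_add_le _ _
    have h3 : C * |W s - 0| ≤ C * MW := by
      refine mul_le_mul_of_nonneg_left ?_ hC
      simpa using hMW s
    simp only [Real.norm_eq_abs]
    linarith
  have hgYint : IntegrableOn (fun s => g s (Y s)) (Icc 0 T) := hbig Y MY hYm hMY
  have hgVint : IntegrableOn (fun s => g s (V s)) (Icc 0 T) := hbig V MV hVm hMV
  have hhint : IntegrableOn h (Icc 0 T) := hgYint.sub hgVint
  -- pointwise bounds on h
  have hhb : ∀ s ∈ Icc (0:ℝ) T, |h s| ≤ C * |D s| := fun s hs => hglip s hs (Y s) (V s)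
  have hDb : ∀ s, |D s| ≤ MY + MV := by
    intro s
    calc |Y s - V s| ≤ |Y s| + |V s| := abs_sub _ _
      _ ≤ MY + MV := add_le_add (hMY s) (hMV s)
  have hhbK : ∀ s ∈ Icc (0:ℝ) T, |h s| ≤ K := by
    intro s hs
    exact (hhb s hs).trans (mul_le_mul_of_nonneg_left (hDb s) hC)
  -- the equation for D
  have hDeq : ∀ t ∈ Icc (0:ℝ) T, D t = (y - x) - (∫ s in Icc (0:ℝ) t, h s) - A t := by
    intro t ht
    have hsub : Icc (0:ℝ) t ⊆ Icc 0 T := Icc_subset_Icc le_rfl ht.2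
    have : (∫ s in Icc (0:ℝ) t, h s)
        = (∫ s in Icc (0:ℝ) t, g s (Y s)) - ∫ s in Icc (0:ℝ) t, g s (V s) :=
      integral_sub (hgYint.mono_set hsub) (hgVint.mono_set hsub)
    rw [hD]
    simp only [hYeq t ht, hVeq t ht, this]
    ring
  -- splitting lemma
  have hsplit : ∀ a b : ℝ, 0 ≤ a → a ≤ b → b ≤ T →
      (∫ s in Icc (0:ℝ) b, h s) = (∫ s in Icc (0:ℝ) a, h s) + ∫ s in Ioc a b, h s := by
    intro a b ha hab hbT
    rw [← Icc_union_Ioc_eq_Icc ha hab]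
    refine setIntegral_union ?_ measurableSet_Ioc
      (hhint.mono_set (Icc_subset_Icc le_rfl (hab.trans hbT)))
      (hhint.mono_set (fun s hs => ⟨ha.trans (le_of_lt hs.1), hs.2.trans hbT⟩))
    rw [Set.disjoint_left]
    intro s hs1 hs2
    exact absurd hs1.2 (not_le.mpr hs2.1)
  -- bound on integral over Ioc
  have hIocK : ∀ a b : ℝ, 0 ≤ a → a ≤ b → b ≤ T →
      -(∫ s in Ioc a b, h s) ≤ K * (b - a) := by
    intro a b ha hab hbT
    have hsub : Ioc a b ⊆ Icc 0 T := fun s hs => ⟨ha.trans (le_of_lt hs.1), hs.2.trans hbT⟩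
    have hint : IntegrableOn h (Ioc a b) := hhint.mono_set hsub
    have : |∫ s in Ioc a b, h s| ≤ K * (b - a) := by
      have := norm_setIntegral_le_of_norm_le_const (C := K)
        (s := Ioc a b) (μ := volume) (f := h)
        (by rw [Real.volume_Ioc]; exact ENNReal.ofReal_lt_top)
        (fun s hs => by simpa [Real.norm_eq_abs] using hhbK s (hsub hs))
      rw [Real.volume_real_Ioc_of_le hab] at this
      simpa [Real.norm_eq_abs] using this
    linarith [neg_abs_le (∫ s in Ioc a b, h s)]
  -- D 0 ≤ 0
  have hD0 : D 0 ≤ 0 := by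
    have h0T : (0:ℝ) ∈ Icc (0:ℝ) T := ⟨le_rfl, le_of_lt hT⟩
    have := hDeq 0 h0T
    rw [Icc_self] at this
    have hz : (∫ s in ({0}:Set ℝ), h s) = 0 := by
      rw [Measure.restrict_eq_zero.mpr (by simp), integral_zero_measure]
    rw [this, hz, hA0]
    linarith
  -- key inequality: φ t ≤ C * ∫_{[0,t]} φ
  have hφint : IntegrableOn φ (Icc 0 T) :=
    aux_integrableOn_of_bdd (M := MY + MV) hφm (fun s _ => by
      rw [abs_le]
      constructor
      · linarith [le_max_right (D s) 0, hMY0, hMV0]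
      · exact max_le ((le_abs_self _).trans (hDb s)) (by linarith))
  have hkey : ∀ t ∈ Icc (0:ℝ) T, φ t ≤ C * ∫ s in Icc (0:ℝ) t, φ s := by
    intro t ht
    have hφintt : IntegrableOn φ (Icc 0 t) := hφint.mono_set (Icc_subset_Icc le_rfl ht.2)
    have hφnn : 0 ≤ ∫ s in Icc (0:ℝ) t, φ s :=
      setIntegral_nonneg measurableSet_Icc (fun s _ => le_max_right _ _)
    rcases le_or_gt (D t) 0 with hDt | hDt
    · rw [hφ]
      simp only [max_le_iff]
      exact ⟨le_trans hDt (mul_nonneg hC hφnn), mul_nonneg hC hφnn⟩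
    -- D t > 0 case
    · set S : Set ℝ := {s | s ∈ Icc (0:ℝ) t ∧ D s ≤ 0} with hS
      have h0S : (0:ℝ) ∈ S := ⟨⟨le_rfl, ht.1⟩, hD0⟩
      have hSne : S.Nonempty := ⟨0, h0S⟩
      have hSbdd : BddAbove S := ⟨t, fun s hs => hs.1.2⟩
      set τ : ℝ := sSup S with hτ
      have hτ0 : 0 ≤ τ := le_csSup hSbdd h0S
      have hτt : τ ≤ t := csSup_le hSne (fun s hs => hs.1.2)
      have hτT : τ ≤ T := hτt.trans ht.2
      -- D τ ≤ 0
      have hDτ : D τ ≤ 0 := by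
        refine le_of_forall_pos_le_add ?_
        intro ε hε
        obtain ⟨s, hsS, hsτ⟩ : ∃ s ∈ S, τ - ε/(K+1) < s := by
          rcases exists_lt_of_lt_csSup hSne (show τ - ε/(K+1) < τ by
            have : 0 < ε/(K+1) := div_pos hε (by linarith)
            linarith) with ⟨s, hs1, hs2⟩
          exact ⟨s, hs1, hs2⟩
        have hsle : s ≤ τ := le_csSup hSbdd hsS
        have hs0 : 0 ≤ s := hsS.1.1
        have hseq := hDeq s ⟨hs0, hsS.1.2.trans ht.2⟩
        have hτeq := hDeq τ ⟨hτ0, hτT⟩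
        have hAsτ : A s ≤ A τ := hA ⟨hs0, hsS.1.2.trans ht.2⟩ ⟨hτ0, hτT⟩ hsle
        have hspl := hsplit s τ hs0 hsle hτT
        have hIoc := hIocK s τ hs0 hsle hτT
        have hDs : D s ≤ 0 := hsS.2
        have hKb : K * (τ - s) ≤ ε := by
          have h1 : τ - s ≤ ε/(K+1) := by linarith
          have h2 : K * (τ - s) ≤ K * (ε/(K+1)) :=
            mul_le_mul_of_nonneg_left h1 hK0
          have h3 : K * (ε/(K+1)) ≤ ε := by
            rw [div_eq_inv_mul, ← mul_assoc]
            have : K * (K+1)⁻¹ ≤ 1 := by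
              rw [mul_inv_le_iff₀ (by linarith)]
              linarith
            nlinarith
          linarith
        -- D τ = D s - ∫_{Ioc s τ} h - (A τ - A s)
        have : D τ = D s - (∫ u in Ioc s τ, h u) - (A τ - A s) := by
          rw [hτeq, hseq, hspl]; ring
        rw [this]
        linarith
      -- positivity on Ioc τ t
      have hpos : ∀ s ∈ Ioc τ t, 0 < D s := by
        intro s hs
        by_contra hc
        push_neg at hc
        have : s ∈ S := ⟨⟨hτ0.trans (le_of_lt hs.1), hs.2⟩, hc⟩
        exact absurd (le_csSup hSbdd this) (not_le.mpr hs.1)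
      -- main chain
      have hτeq := hDeq τ ⟨hτ0, hτT⟩
      have hteq := hDeq t ht
      have hspl := hsplit τ t hτ0 hτt ht.2
      have hAτt : A τ ≤ A t := hA ⟨hτ0, hτT⟩ ht hτt
      have hintIoc : IntegrableOn h (Ioc τ t) :=
        hhint.mono_set (fun s hs => ⟨hτ0.trans (le_of_lt hs.1), hs.2.trans ht.2⟩)
      have hφintIoc : IntegrableOn (fun s => C * φ s) (Ioc τ t) :=
        ((hφint.mono_set (fun s hs => ⟨hτ0.trans (le_of_lt hs.1), hs.2.trans ht.2⟩)).const_mul C)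
      have hstep : -(∫ s in Ioc τ t, h s) ≤ ∫ s in Ioc τ t, C * φ s := by
        rw [← integral_neg]
        refine setIntegral_mono_on hintIoc.neg hφintIoc measurableSet_Ioc ?_
        intro s hs
        have hsT : s ∈ Icc (0:ℝ) T := ⟨hτ0.trans (le_of_lt hs.1), hs.2.trans ht.2⟩
        have h1 : |h s| ≤ C * |D s| := hhb s hsT
        have h2 : 0 < D s := hpos s hs
        have h3 : |D s| = D s := abs_of_pos h2
        have h4 : φ s = D s := max_eq_left (le_of_lt h2)
        calc -(h s) ≤ |h s| := neg_le_abs _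
          _ ≤ C * |D s| := h1
          _ = C * φ s := by rw [h3, h4]
      have hmono2 : (∫ s in Ioc τ t, C * φ s) ≤ C * ∫ s in Icc (0:ℝ) t, φ s := by
        rw [integral_const_mul]
        refine mul_le_mul_of_nonneg_left ?_ hC
        refine setIntegral_mono_set hφintt ?_ ?_
        · exact ae_of_all _ fun s => le_max_right _ _
        · exact HasSubset.Subset.eventuallyLE
            (fun s hs => ⟨hτ0.trans (le_of_lt hs.1), hs.2⟩)
      have hDt' : D t = D τ - (∫ s in Ioc τ t, h s) - (A t - A τ) := by
        rw [hteq, hτeq, hspl]; ring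
      have : D t ≤ C * ∫ s in Icc (0:ℝ) t, φ s := by
        rw [hDt']
        linarith
      rw [hφ]
      simp only [max_le_iff]
      exact ⟨this, mul_nonneg hC (setIntegral_nonneg measurableSet_Icc (fun s _ => le_max_right _ _))⟩
  -- apply Grönwall
  have hφb : ∀ s, φ s ≤ MY + MV :=
    fun s => max_le ((le_abs_self _).trans (hDb s)) (by linarith)
  have hfinal := aux_gronwall T C (MY + MV) hC (by linarith) φ hφm
    (fun s => le_max_right _ _) hφb hkey
  intro t ht
  have := hfinal t ht
  have hle : D t ≤ φ t := le_max_left _ _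
  have : D t ≤ 0 := hle.trans this
  have h2 : Y t - V t ≤ 0 := this
  linarith
end

section
/- Strict comparison via the nondecreasing perturbation. Let g be a Carathéodory driver with Lipschitz constant C, let f : ℝ → ℝ be bounded and measurable, and let A : ℝ → ℝ be nondecreasing on [0, T] with A 0 = 0. Let x, y ∈ ℝ with x ≥ y. Let V be a solution of the forward integral equation with data (x, g, f), and let Y : ℝ → ℝ be bounded and measurable with Y t = y − (∫ s in [0, t], g s (Y s) ds) + f t − A t for every t ∈ [0, T]. If ν ∈ [0, T] satisfies A ν > 0, then Y ν < V ν. -/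
open MeasureTheory Set Filter

private lemma le_of_forall_pos_le_add' {a b : ℝ} (h : ∀ ε > 0, a ≤ b + ε) : a ≤ b := by
  by_contra hlt
  push_neg at hlt
  have := h ((a - b) / 2) (by linarith)
  linarith

private lemma intOn_bdd {w : ℝ → ℝ} (hm : Measurable w) {M : ℝ}
    (hM : ∀ t, |w t| ≤ M) (s : Set ℝ) (hs : volume s ≠ ⊤) :
    IntegrableOn w s :=
  Measure.integrableOn_of_bounded hs hm.aestronglyMeasurable
    (Eventually.of_forall fun t => by simpa [Real.norm_eq_abs] using hM t)

/-- Forward Grönwall iteration: a nonnegative bounded function dominated by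
`C` times its own running integral vanishes. -/
private lemma gronwall_fwd {w : ℝ → ℝ} {a b B C : ℝ} (hC : 0 ≤ C)
    (hint : IntegrableOn w (Ioc a b))
    (hpos : ∀ t ∈ Ioc a b, 0 ≤ w t) (hbd : ∀ t ∈ Ioc a b, w t ≤ B)
    (hrec : ∀ t ∈ Ioc a b, w t ≤ C * ∫ s in Ioc a t, w s) :
    ∀ t ∈ Ioc a b, w t ≤ 0 := by
  have key : ∀ n : ℕ, ∀ t ∈ Ioc a b, w t ≤ B * (C * (t - a)) ^ n / (n.factorial : ℝ) := by
    intro n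
    induction n with
    | zero => intro t ht; simpa using hbd t ht
    | succ n ih =>
      intro t ht
      have hta : a ≤ t := ht.1.le
      have hIsub : Ioc a t ⊆ Ioc a b := Ioc_subset_Ioc le_rfl ht.2
      have hpoly : IntegrableOn (fun s => B * (C * (s - a)) ^ n / (n.factorial : ℝ))
          (Ioc a t) := by
        apply Continuous.integrableOn_Ioc
        exact (continuous_const.mul
          ((continuous_const.mul (continuous_id.sub continuous_const)).pow n)).div_const _
      have hmono : (∫ s in Ioc a t, w s)
          ≤ ∫ s in Ioc a t, B * (C * (s - a)) ^ n / (n.factorial : ℝ) :=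
        setIntegral_mono_on (hint.mono_set hIsub) hpoly measurableSet_Ioc
          (fun s hs => ih s (hIsub hs))
      have hI : (∫ s in Ioc a t, (s - a) ^ n) = (t - a) ^ (n + 1) / (n + 1) := by
        rw [← intervalIntegral.integral_of_le hta,
          intervalIntegral.integral_comp_sub_right (fun x => x ^ n) a, sub_self,
          integral_pow]
        simp
      have hcalc : (∫ s in Ioc a t, B * (C * (s - a)) ^ n / (n.factorial : ℝ))
          = (B * C ^ n / (n.factorial : ℝ)) * ((t - a) ^ (n + 1) / (n + 1)) := by
        rw [← hI, ← integral_const_mul]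
        exact integral_congr_ae (Eventually.of_forall fun s => by simp only [mul_pow]; ring)
      have hfact : (0:ℝ) < (n.factorial : ℝ) := by positivity
      have hfin : C * ((B * C ^ n / (n.factorial : ℝ)) * ((t - a) ^ (n + 1) / (n + 1)))
          = B * (C * (t - a)) ^ (n + 1) / ((n + 1).factorial : ℝ) := by
        rw [Nat.factorial_succ, mul_pow]
        push_cast
        field_simp
        ring
      calc w t ≤ C * ∫ s in Ioc a t, w s := hrec t ht
        _ ≤ C * ((B * C ^ n / (n.factorial : ℝ)) * ((t - a) ^ (n + 1) / (n + 1))) := by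
            rw [← hcalc]; exact mul_le_mul_of_nonneg_left hmono hC
        _ = B * (C * (t - a)) ^ (n + 1) / ((n + 1).factorial : ℝ) := hfin
  intro t ht
  have hlim : Tendsto (fun n : ℕ => B * (C * (t - a)) ^ n / (n.factorial : ℝ))
      atTop (nhds 0) := by
    have h1 := (FloorSemiring.tendsto_pow_div_factorial_atTop (C * (t - a))).const_mul B
    simpa [mul_div_assoc] using h1
  exact ge_of_tendsto' hlim fun n => key n t ht

/-- Backward Grönwall iteration. -/
private lemma gronwall_bwd {w : ℝ → ℝ} {a b B C : ℝ} (hab : a ≤ b) (hC : 0 ≤ C)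
    (hint : IntegrableOn w (Ioc a b))
    (hpos : ∀ t ∈ Icc a b, 0 ≤ w t) (hbd : ∀ t ∈ Icc a b, w t ≤ B)
    (hrec : ∀ t ∈ Icc a b, w t ≤ C * ∫ s in Ioc t b, w s) :
    ∀ t ∈ Icc a b, w t ≤ 0 := by
  have key : ∀ n : ℕ, ∀ t ∈ Icc a b, w t ≤ B * (C * (b - t)) ^ n / (n.factorial : ℝ) := by
    intro n
    induction n with
    | zero => intro t ht; simpa using hbd t ht
    | succ n ih =>
      intro t ht
      have htb : t ≤ b := ht.2
      have hIsub : Ioc t b ⊆ Ioc a b := Ioc_subset_Ioc ht.1 le_rfl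
      have hpoly : IntegrableOn (fun s => B * (C * (b - s)) ^ n / (n.factorial : ℝ))
          (Ioc t b) := by
        apply Continuous.integrableOn_Ioc
        exact (continuous_const.mul
          ((continuous_const.mul (continuous_const.sub continuous_id)).pow n)).div_const _
      have hmono : (∫ s in Ioc t b, w s)
          ≤ ∫ s in Ioc t b, B * (C * (b - s)) ^ n / (n.factorial : ℝ) :=
        setIntegral_mono_on (hint.mono_set hIsub) hpoly measurableSet_Ioc
          (fun s hs => ih s ⟨ht.1.trans hs.1.le, hs.2⟩)
      have hI : (∫ s in Ioc t b, (b - s) ^ n) = (b - t) ^ (n + 1) / (n + 1) := by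
        rw [← intervalIntegral.integral_of_le htb,
          intervalIntegral.integral_comp_sub_left (fun x => x ^ n) b, sub_self,
          integral_pow]
        simp
      have hcalc : (∫ s in Ioc t b, B * (C * (b - s)) ^ n / (n.factorial : ℝ))
          = (B * C ^ n / (n.factorial : ℝ)) * ((b - t) ^ (n + 1) / (n + 1)) := by
        rw [← hI, ← integral_const_mul]
        exact integral_congr_ae (Eventually.of_forall fun s => by simp only [mul_pow]; ring)
      have hfin : C * ((B * C ^ n / (n.factorial : ℝ)) * ((b - t) ^ (n + 1) / (n + 1)))
          = B * (C * (b - t)) ^ (n + 1) / ((n + 1).factorial : ℝ) := by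
        rw [Nat.factorial_succ, mul_pow]
        push_cast
        field_simp
        ring
      calc w t ≤ C * ∫ s in Ioc t b, w s := hrec t ht
        _ ≤ C * ((B * C ^ n / (n.factorial : ℝ)) * ((b - t) ^ (n + 1) / (n + 1))) := by
            rw [← hcalc]; exact mul_le_mul_of_nonneg_left hmono hC
        _ = B * (C * (b - t)) ^ (n + 1) / ((n + 1).factorial : ℝ) := hfin
  intro t ht
  have hlim : Tendsto (fun n : ℕ => B * (C * (b - t)) ^ n / (n.factorial : ℝ))
      atTop (nhds 0) := by
    have h1 := (FloorSemiring.tendsto_pow_div_factorial_atTop (C * (b - t))).const_mul B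
    simpa [mul_div_assoc] using h1
  exact ge_of_tendsto' hlim fun n => key n t ht

/-- Strict comparison via the nondecreasing perturbation. -/
theorem forward_eq_strict_comparison_perturbation
    (T C : ℝ) (hT : 0 < T) (hC : 0 ≤ C)
    (g : ℝ → ℝ → ℝ) (hg : CaratheodoryDriver T C g)
    (f : ℝ → ℝ) (hf : BddMeas f)
    (A : ℝ → ℝ) (hA : MonotoneOn A (Icc 0 T)) (hA0 : A 0 = 0)
    (x y : ℝ) (hxy : y ≤ x)
    (V : ℝ → ℝ) (hV : IsFwdSolution T g x f V)
    (Y : ℝ → ℝ) (hY : BddMeas Y)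
    (hYeq : ∀ t ∈ Icc (0 : ℝ) T,
      Y t = y - (∫ s in Icc (0 : ℝ) t, g s (Y s)) + f t - A t)
    (ν : ℝ) (hν : ν ∈ Icc (0 : ℝ) T) (hAν : 0 < A ν) :
    Y ν < V ν := by
  obtain ⟨⟨hVm, MV, hMV⟩, hVeq⟩ := hV
  obtain ⟨hYm, MY, hMY⟩ := hY
  obtain ⟨hgm, hg0, hgL⟩ := hg
  have hT0 : (0:ℝ) ≤ T := hT.le
  set D : ℝ → ℝ := fun t => V t - Y t with hDdef
  set h : ℝ → ℝ := fun s => g s (V s) - g s (Y s) with hhdef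
  have hgVm : Measurable fun s => g s (V s) := hgm.comp (measurable_id.prodMk hVm)
  have hgYm : Measurable fun s => g s (Y s) := hgm.comp (measurable_id.prodMk hYm)
  have hhm : Measurable h := hgVm.sub hgYm
  have hDm : Measurable D := hVm.sub hYm
  have hMVnn : 0 ≤ MV := (abs_nonneg _).trans (hMV 0)
  have hMYnn : 0 ≤ MY := (abs_nonneg _).trans (hMY 0)
  set K : ℝ := C * (MV + MY) with hKdef
  have hKnn : 0 ≤ K := mul_nonneg hC (by linarith)
  have hDbd : ∀ t, |D t| ≤ MV + MY := by
    intro t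
    calc |D t| ≤ |V t| + |Y t| := abs_sub _ _
      _ ≤ MV + MY := add_le_add (hMV t) (hMY t)
  have hvIoc : ∀ a b : ℝ, volume (Ioc a b) ≠ ⊤ := fun a b => by
    simp [Real.volume_Ioc]
  have hvIcc : ∀ a b : ℝ, volume (Icc a b) ≠ ⊤ := fun a b => by
    simp [Real.volume_Icc]
  have hDint : ∀ a b : ℝ, IntegrableOn D (Ioc a b) := fun a b =>
    intOn_bdd hDm hDbd _ (hvIoc a b)
  have hhbd : ∀ s ∈ Icc (0:ℝ) T, |h s| ≤ K := by
    intro s hs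
    calc |h s| ≤ C * |V s - Y s| := hgL s hs _ _
      _ ≤ C * (MV + MY) := mul_le_mul_of_nonneg_left (hDbd s) hC
  have hhint : IntegrableOn h (Icc 0 T) := by
    refine Measure.integrableOn_of_bounded (M := K) (hvIcc 0 T) hhm.aestronglyMeasurable ?_
    exact (ae_restrict_iff' measurableSet_Icc).mpr
      (Eventually.of_forall fun s hs => by simpa [Real.norm_eq_abs] using hhbd s hs)
  -- integrability of the two drivers
  have hgVint : IntegrableOn (fun s => g s (V s)) (Icc 0 T) := by
    have hb : IntegrableOn (fun s => |g s 0| + C * MV) (Icc 0 T) :=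
      hg0.abs.add (integrableOn_const (hvIcc 0 T))
    refine hb.mono' hgVm.aestronglyMeasurable.restrict ?_
    refine (ae_restrict_iff' measurableSet_Icc).mpr (Eventually.of_forall fun s hs => ?_)
    have h1 : |g s (V s) - g s 0| ≤ C * |V s - 0| := hgL s hs _ _
    have h2 : |g s (V s)| ≤ |g s (V s) - g s 0| + |g s 0| := by
      have := abs_add_le (g s (V s) - g s 0) (g s 0); simpa using this
    have h3 : C * |V s - 0| ≤ C * MV := by
      rw [sub_zero]; exact mul_le_mul_of_nonneg_left (hMV s) hC
    rw [Real.norm_eq_abs]; linarith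
  have hgYint : IntegrableOn (fun s => g s (Y s)) (Icc 0 T) := by
    have hb : IntegrableOn (fun s => |g s 0| + C * MY) (Icc 0 T) :=
      hg0.abs.add (integrableOn_const (hvIcc 0 T))
    refine hb.mono' hgYm.aestronglyMeasurable.restrict ?_
    refine (ae_restrict_iff' measurableSet_Icc).mpr (Eventually.of_forall fun s hs => ?_)
    have h1 : |g s (Y s) - g s 0| ≤ C * |Y s - 0| := hgL s hs _ _
    have h2 : |g s (Y s)| ≤ |g s (Y s) - g s 0| + |g s 0| := by
      have := abs_add_le (g s (Y s) - g s 0) (g s 0); simpa using this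
    have h3 : C * |Y s - 0| ≤ C * MY := by
      rw [sub_zero]; exact mul_le_mul_of_nonneg_left (hMY s) hC
    rw [Real.norm_eq_abs]; linarith
  -- the basic identity
  have hDform : ∀ t ∈ Icc (0:ℝ) T, D t = (x - y) + A t - ∫ s in Icc (0:ℝ) t, h s := by
    intro t ht
    have hsub : Icc (0:ℝ) t ⊆ Icc 0 T := Icc_subset_Icc le_rfl ht.2
    have hsubint : (∫ s in Icc (0:ℝ) t, h s)
        = (∫ s in Icc (0:ℝ) t, g s (V s)) - ∫ s in Icc (0:ℝ) t, g s (Y s) :=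
      integral_sub (hgVint.mono_set hsub) (hgYint.mono_set hsub)
    have h1 := hVeq t ht
    have h2 := hYeq t ht
    show V t - Y t = (x - y) + A t - ∫ s in Icc (0:ℝ) t, h s
    rw [hsubint, h1, h2]; ring
  -- splitting
  have hdisj : ∀ u v w : ℝ, Disjoint (Icc u v) (Ioc v w) := by
    intro u v w
    exact disjoint_left.mpr fun s hs hs' => absurd hs.2 (not_le.mpr hs'.1)
  have hdisj2 : ∀ u v w : ℝ, Disjoint (Ioc u v) (Ioc v w) := by
    intro u v w
    exact disjoint_left.mpr fun s hs hs' => absurd hs.2 (not_le.mpr hs'.1)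
  have hsplitIcc : ∀ t' t : ℝ, 0 ≤ t' → t' ≤ t → t ≤ T →
      (∫ s in Icc (0:ℝ) t, h s) = (∫ s in Icc (0:ℝ) t', h s) + ∫ s in Ioc t' t, h s := by
    intro t' t h0 h1 h2
    rw [← Icc_union_Ioc_eq_Icc h0 h1]
    exact setIntegral_union (hdisj 0 t' t) measurableSet_Ioc
      (hhint.mono_set (Icc_subset_Icc le_rfl ((h1.trans h2)))
        |>.mono_set (Icc_subset_Icc le_rfl (le_refl t')) )
      (hhint.mono_set fun s hs => ⟨h0.trans hs.1.le, hs.2.trans h2⟩)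
  have hDdiff : ∀ t' t : ℝ, 0 ≤ t' → t' ≤ t → t ≤ T →
      D t = D t' + (A t - A t') - ∫ s in Ioc t' t, h s := by
    intro t' t h0 h1 h2
    rw [hDform t ⟨h0.trans h1, h2⟩, hDform t' ⟨h0, h1.trans h2⟩, hsplitIcc t' t h0 h1 h2]
    ring
  have hIocbd : ∀ t' t : ℝ, 0 ≤ t' → t' ≤ t → t ≤ T →
      |∫ s in Ioc t' t, h s| ≤ K * (t - t') := by
    intro t' t h0 h1 h2
    have hb := norm_setIntegral_le_of_norm_le_const (μ := volume) (s := Ioc t' t)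
      (f := h) (C := K) ((hvIoc t' t).lt_top)
      (fun s hs => by
        have : s ∈ Icc (0:ℝ) T := ⟨h0.trans hs.1.le, hs.2.trans h2⟩
        simpa [Real.norm_eq_abs] using hhbd s this)
    rw [Real.norm_eq_abs] at hb
    calc |∫ s in Ioc t' t, h s| ≤ K * volume.real (Ioc t' t) := hb
      _ = K * (t - t') := by rw [Real.volume_real_Ioc_of_le h1]
  have hIcc00 : (∫ s in Icc (0:ℝ) 0, h s) = 0 := by
    have : volume (Icc (0:ℝ) 0) = 0 := by simp
    rw [Measure.restrict_eq_zero.mpr this, integral_zero_measure]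
  have hD0 : D 0 = x - y := by
    rw [hDform 0 ⟨le_rfl, hT0⟩, hA0, hIcc00]; ring
  -- pointwise comparison of h with D
  have hhleD : ∀ s ∈ Icc (0:ℝ) T, h s ≤ C * |D s| := by
    intro s hs
    calc h s ≤ |h s| := le_abs_self _
      _ ≤ C * |V s - Y s| := hgL s hs _ _
      _ = C * |D s| := rfl
  -- Step 1 : D is nonnegative on [0, T]
  have hDnonneg : ∀ t ∈ Icc (0:ℝ) T, 0 ≤ D t := by
    by_contra hcon
    push_neg at hcon
    obtain ⟨t0, ht0, ht0neg⟩ := hcon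
    set S : Set ℝ := {t | t ∈ Icc 0 t0 ∧ 0 ≤ D t} with hSdef
    have h0S : (0:ℝ) ∈ S := ⟨⟨le_rfl, ht0.1⟩, by rw [hD0]; linarith⟩
    have hSne : S.Nonempty := ⟨0, h0S⟩
    have hSbdd : BddAbove S := ⟨t0, fun t ht => ht.1.2⟩
    set τ := sSup S with hτdef
    have hτ0 : 0 ≤ τ := le_csSup hSbdd h0S
    have hτt0 : τ ≤ t0 := csSup_le hSne fun t ht => ht.1.2
    have hτT : τ ≤ T := hτt0.trans ht0.2
    have hneg : ∀ t ∈ Ioc τ t0, D t < 0 := by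
      intro t ht
      by_contra hge
      push_neg at hge
      exact absurd (le_csSup hSbdd ⟨⟨hτ0.trans ht.1.le, ht.2⟩, hge⟩) (not_le.mpr ht.1)
    have hrec : ∀ t ∈ Icc τ t0, -D t ≤ C * ∫ s in Ioc τ t, -D s := by
      intro t ht
      refine le_of_forall_pos_le_add' ?_
      intro ε hε
      obtain ⟨t', ht'S, ht'gt⟩ := exists_lt_of_lt_csSup hSne
        (show τ - ε / (K + 1) < τ by
          have : 0 < ε / (K + 1) := div_pos hε (by linarith)
          linarith)
      have ht'τ : t' ≤ τ := le_csSup hSbdd ht'S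
      have h0t' : 0 ≤ t' := ht'S.1.1
      have htT : t ≤ T := ht.2.trans ht0.2
      have ht't : t' ≤ t := ht'τ.trans ht.1
      have hid := hDdiff t' t h0t' ht't htT
      have hsplit2 : (∫ s in Ioc t' t, h s) = (∫ s in Ioc t' τ, h s) + ∫ s in Ioc τ t, h s := by
        rw [← Ioc_union_Ioc_eq_Ioc ht'τ ht.1]
        exact setIntegral_union (hdisj2 t' τ t) measurableSet_Ioc
          (hhint.mono_set fun s hs => ⟨h0t'.trans hs.1.le, hs.2.trans hτT⟩)
          (hhint.mono_set fun s hs => ⟨hτ0.trans hs.1.le, hs.2.trans htT⟩)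
      have hb1 : |∫ s in Ioc t' τ, h s| ≤ K * (τ - t') := hIocbd t' τ h0t' ht'τ hτT
      have hb1' : (∫ s in Ioc t' τ, h s) ≤ K * (τ - t') := (le_abs_self _).trans hb1
      have hKq : K * (τ - t') ≤ ε := by
        have h1 : τ - t' ≤ ε / (K + 1) := by linarith
        have h2 : K * (τ - t') ≤ K * (ε / (K + 1)) := mul_le_mul_of_nonneg_left h1 hKnn
        have h3 : K * (ε / (K + 1)) ≤ ε := by
          rw [mul_div_assoc', div_le_iff₀ (by linarith : (0:ℝ) < K + 1)]
          nlinarith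
        linarith
      have hmono : (∫ s in Ioc τ t, h s) ≤ ∫ s in Ioc τ t, C * -D s := by
        refine setIntegral_mono_on
          (hhint.mono_set fun s hs => ⟨hτ0.trans hs.1.le, hs.2.trans htT⟩)
          ((hDint τ t).neg.const_mul C) measurableSet_Ioc ?_
        intro s hs
        have hsI : s ∈ Icc (0:ℝ) T := ⟨hτ0.trans hs.1.le, hs.2.trans htT⟩
        have hDneg : D s < 0 := hneg s ⟨hs.1, hs.2.trans ht.2⟩
        calc h s ≤ C * |D s| := hhleD s hsI
          _ = C * -D s := by rw [abs_of_neg hDneg]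
      have hCi : (∫ s in Ioc τ t, C * -D s) = C * ∫ s in Ioc τ t, -D s :=
        integral_const_mul _ _
      have hAmono : 0 ≤ A t - A t' :=
        sub_nonneg.mpr (hA ⟨h0t', ht't.trans htT⟩ ⟨hτ0.trans ht.1, htT⟩ ht't)
      have hDt' : 0 ≤ D t' := ht'S.2
      rw [hCi] at hmono
      linarith
    have hfwd := gronwall_fwd (w := fun s => -D s) (B := MV + MY) hC
      (intOn_bdd (M := MV + MY) hDm.neg (fun t => by simpa [abs_neg] using hDbd t) _ (hvIoc τ t0))
      (fun t ht => by linarith [hneg t ht])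
      (fun t ht => by linarith [neg_le_abs (D t), hDbd t])
      (fun t ht => by simpa using hrec t ⟨ht.1.le, ht.2⟩)
    rcases eq_or_lt_of_le hτt0 with heq | hlt
    · have := hrec t0 ⟨hτt0, le_rfl⟩
      rw [← heq] at this ht0neg
      simp [Ioc_self] at this
      linarith
    · have := hfwd t0 ⟨hlt, le_rfl⟩
      linarith
  -- Step 2 : strict inequality at ν
  by_contra hnot
  push_neg at hnot
  have hDν : D ν = 0 :=
    le_antisymm (sub_nonpos.mpr hnot) (hDnonneg ν hν)
  have hmono0 : ∀ t ∈ Icc (0:ℝ) ν, (∫ s in Ioc t ν, h s) ≤ C * ∫ s in Ioc t ν, D s := by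
    intro t ht
    have hCi : (∫ s in Ioc t ν, C * D s) = C * ∫ s in Ioc t ν, D s := integral_const_mul _ _
    rw [← hCi]
    refine setIntegral_mono_on
      (hhint.mono_set fun s hs => ⟨ht.1.trans hs.1.le, hs.2.trans hν.2⟩)
      ((hDint t ν).const_mul C) measurableSet_Ioc ?_
    intro s hs
    have hsI : s ∈ Icc (0:ℝ) T := ⟨ht.1.trans hs.1.le, hs.2.trans hν.2⟩
    calc h s ≤ C * |D s| := hhleD s hsI
      _ = C * D s := by rw [abs_of_nonneg (hDnonneg s hsI)]
  have hrec2 : ∀ t ∈ Icc (0:ℝ) ν, D t ≤ C * ∫ s in Ioc t ν, D s := by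
    intro t ht
    have hid := hDdiff t ν ht.1 ht.2 hν.2
    rw [hDν] at hid
    have hAm : 0 ≤ A ν - A t := sub_nonneg.mpr (hA ⟨ht.1, ht.2.trans hν.2⟩ hν ht.2)
    have := hmono0 t ht
    linarith
  have hbwd := gronwall_bwd hν.1 hC (hDint 0 ν)
    (fun t ht => hDnonneg t ⟨ht.1, ht.2.trans hν.2⟩)
    (fun t ht => (le_abs_self _).trans (hDbd t))
    hrec2
  have hDzero : ∀ t ∈ Icc (0:ℝ) ν, D t = 0 := fun t ht =>
    le_antisymm (hbwd t ht) (hDnonneg t ⟨ht.1, ht.2.trans hν.2⟩)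
  have hint0 : (∫ s in Ioc (0:ℝ) ν, D s) = 0 := by
    refine integral_eq_zero_of_ae ?_
    refine (ae_restrict_iff' measurableSet_Ioc).mpr (Eventually.of_forall fun s hs => ?_)
    exact hDzero s ⟨hs.1.le, hs.2⟩
  have hhν : (∫ s in Ioc (0:ℝ) ν, h s) ≤ 0 := by
    have := hmono0 0 ⟨le_rfl, hν.1⟩
    rw [hint0] at this
    simpa using this
  have hid := hDdiff 0 ν le_rfl hν.1 hν.2
  rw [hDν, hD0, hA0] at hid
  linarith
end

section
/- Stability (a priori) estimate for forward integral equations. Let g¹ be a Carathéodory driver with Lipschitz constant C, and let g² : ℝ → ℝ → ℝ be jointly measurable. For i = 1, 2, let xⁱ ∈ ℝ, let fⁱ : ℝ → ℝ be bounded and measurable, and let Vⁱ : ℝ → ℝ be bounded and measurable with Vⁱ t = xⁱ − (∫ s in [0, t], gⁱ s (Vⁱ s) ds) + fⁱ t for every t ∈ [0, T], where s ↦ g² s (V² s) is integrable on [0, T]. Then for every t ∈ [0, T]: |V¹ t − V² t| ≤ (|x¹ − x²| + (∫ s in [0, T], |g¹ s (V² s) − g² s (V² s)| ds) + sup over s ∈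 [0, T] of |f¹ s − f² s|) · exp(C·t). -/
open MeasureTheory Set

lemma gronwall_poly_int (C : ℝ) (t : ℝ) (ht : 0 ≤ t) (k : ℕ) :
    C * ∫ s in Icc (0:ℝ) t, (C*s)^k / k.factorial
      = (C*t)^(k+1) / (k+1).factorial := by
  rw [MeasureTheory.integral_Icc_eq_integral_Ioc, ← intervalIntegral.integral_of_le ht]
  have hrw : ∀ s : ℝ, (C*s)^k / k.factorial = (C^k / k.factorial) * s^k := by
    intro s; rw [mul_pow]; ring
  simp_rw [hrw]
  rw [intervalIntegral.integral_const_mul, integral_pow, zero_pow (Nat.succ_ne_zero k)]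
  have h1 : (k.factorial : ℝ) ≠ 0 := Nat.cast_ne_zero.mpr k.factorial_ne_zero
  have h2 : ((k : ℝ) + 1) ≠ 0 := by positivity
  rw [Nat.factorial_succ]
  push_cast
  field_simp
  ring

/-- Grönwall iteration lemma: a bounded integrable function satisfying the
integral inequality `u t ≤ A + C ∫_{[0,t]} u` is bounded by `A exp(C t)`. -/
lemma gronwall_iter (T C A M : ℝ) (hC : 0 ≤ C) (hA : 0 ≤ A) (hM : 0 ≤ M)
    (u : ℝ → ℝ)
    (huM : ∀ t ∈ Icc (0:ℝ) T, u t ≤ M)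
    (hui : IntegrableOn u (Icc 0 T))
    (key : ∀ t ∈ Icc (0:ℝ) T, u t ≤ A + C * ∫ s in Icc (0:ℝ) t, u s) :
    ∀ t ∈ Icc (0:ℝ) T, u t ≤ A * Real.exp (C * t) := by
  have main : ∀ n : ℕ, ∀ t ∈ Icc (0:ℝ) T,
      u t ≤ A * (∑ k ∈ Finset.range n, (C*t)^k / k.factorial)
            + M * ((C*t)^n / n.factorial) := by
    intro n
    induction n with
    | zero => intro t ht; simpa using huM t ht
    | succ n ih =>
      intro t ht
      have ht0 : 0 ≤ t := ht.1
      set B : ℝ → ℝ := fun s =>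
        A * (∑ k ∈ Finset.range n, (C*s)^k / k.factorial)
          + M * ((C*s)^n / n.factorial) with hBdef
      have hIcont : ∀ k : ℕ, Continuous (fun s : ℝ => (C*s)^k / k.factorial) := by
        intro k; fun_prop
      have hBcont : Continuous B := by
        apply Continuous.add
        · exact continuous_const.mul (continuous_finset_sum _ (fun k _ => hIcont k))
        · exact continuous_const.mul (hIcont n)
      have hBint : IntegrableOn B (Icc (0:ℝ) t) := hBcont.integrableOn_Icc
      have hsub : Icc (0:ℝ) t ⊆ Icc (0:ℝ) T := Icc_subset_Icc le_rfl ht.2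
      have h1 : ∫ s in Icc (0:ℝ) t, u s ≤ ∫ s in Icc (0:ℝ) t, B s :=
        setIntegral_mono_on (hui.mono_set hsub) hBint measurableSet_Icc
          (fun s hs => ih s ⟨hs.1, hs.2.trans ht.2⟩)
      have hIint : ∀ k : ℕ,
          IntegrableOn (fun s : ℝ => (C*s)^k / k.factorial) (Icc (0:ℝ) t) :=
        fun k => (hIcont k).integrableOn_Icc
      have h2 : C * ∫ s in Icc (0:ℝ) t, B s
          = A * (∑ k ∈ Finset.range n, (C*t)^(k+1) / (k+1).factorial)
            + M * ((C*t)^(n+1) / (n+1).factorial) := by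
        have e1 : ∫ s in Icc (0:ℝ) t, B s
            = A * (∑ k ∈ Finset.range n, ∫ s in Icc (0:ℝ) t, (C*s)^k / k.factorial)
              + M * (∫ s in Icc (0:ℝ) t, (C*s)^n / n.factorial) := by
          rw [hBdef]
          rw [MeasureTheory.integral_add
              (((integrable_finset_sum _ (fun k _ => hIint k))).const_mul A)
              ((hIint n).const_mul M),
            MeasureTheory.integral_const_mul, MeasureTheory.integral_const_mul,
            MeasureTheory.integral_finset_sum _ (fun k _ => hIint k)]
        rw [e1]
        simp_rw [← gronwall_poly_int C t ht0]
        rw [← Finset.mul_sum]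
        ring
      have h3 : u t ≤ A + C * ∫ s in Icc (0:ℝ) t, B s := by
        have := key t ht
        have := mul_le_mul_of_nonneg_left h1 hC
        linarith
      rw [h2] at h3
      refine h3.trans (le_of_eq ?_)
      rw [Finset.sum_range_succ']
      simp only [pow_zero, Nat.factorial_zero, Nat.cast_one]
      ring
  intro t ht
  have hx : 0 ≤ C * t := mul_nonneg hC ht.1
  have h3 : ∀ n : ℕ, u t ≤ A * Real.exp (C*t) + M * ((C*t)^n / n.factorial) := by
    intro n
    refine (main n t ht).trans ?_
    have := mul_le_mul_of_nonneg_left (Real.sum_le_exp_of_nonneg hx n) hA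
    linarith
  have hlim : Filter.Tendsto
      (fun n : ℕ => A * Real.exp (C*t) + M * ((C*t)^n / n.factorial))
      Filter.atTop (nhds (A * Real.exp (C*t) + M * 0)) :=
    Filter.Tendsto.add tendsto_const_nhds
      ((FloorSemiring.tendsto_pow_div_factorial_atTop (C*t)).const_mul M)
  simpa using ge_of_tendsto' hlim h3

/-- Stability (a priori) estimate for forward integral equations. -/
theorem forward_eq_stability
    (T C : ℝ) (hT : 0 < T) (hC : 0 ≤ C)
    (g₁ : ℝ → ℝ → ℝ) (hg₁ : CaratheodoryDriver T C g₁)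
    (g₂ : ℝ → ℝ → ℝ) (hg₂ : Measurable (Function.uncurry g₂))
    (x₁ x₂ : ℝ) (f₁ f₂ : ℝ → ℝ) (hf₁ : BddMeas f₁) (hf₂ : BddMeas f₂)
    (V₁ V₂ : ℝ → ℝ) (hV₁ : BddMeas V₁) (hV₂ : BddMeas V₂)
    (hV₁eq : ∀ t ∈ Icc (0 : ℝ) T,
      V₁ t = x₁ - (∫ s in Icc (0 : ℝ) t, g₁ s (V₁ s)) + f₁ t)
    (hV₂eq : ∀ t ∈ Icc (0 : ℝ) T,
      V₂ t = x₂ - (∫ s in Icc (0 : ℝ) t, g₂ s (V₂ s)) + f₂ t)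
    (hint : IntegrableOn (fun s => g₂ s (V₂ s)) (Icc 0 T)) :
    ∀ t ∈ Icc (0 : ℝ) T,
      |V₁ t - V₂ t| ≤
        (|x₁ - x₂| + (∫ s in Icc (0 : ℝ) T, |g₁ s (V₂ s) - g₂ s (V₂ s)|) +
          sSup ((fun s => |f₁ s - f₂ s|) '' Icc (0 : ℝ) T)) * Real.exp (C * t) := by
  obtain ⟨hg₁m, hg₁0, hg₁lip⟩ := hg₁
  obtain ⟨hV₁m, M₁, hM₁⟩ := hV₁
  obtain ⟨hV₂m, M₂, hM₂⟩ := hV₂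
  obtain ⟨hf₁m, N₁, hN₁⟩ := hf₁
  obtain ⟨hf₂m, N₂, hN₂⟩ := hf₂
  -- measurability of composed integrands
  have meas₁₁ : Measurable (fun s => g₁ s (V₁ s)) :=
    hg₁m.comp (measurable_id.prodMk hV₁m)
  have meas₁₂ : Measurable (fun s => g₁ s (V₂ s)) :=
    hg₁m.comp (measurable_id.prodMk hV₂m)
  -- integrability of g₁ along a bounded measurable function
  have intaux : ∀ (V : ℝ → ℝ) (M : ℝ), Measurable V → (∀ t, |V t| ≤ M) →
      Measurable (fun s => g₁ s (V s)) →
      IntegrableOn (fun s => g₁ s (V s)) (Icc 0 T) := by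
    intro V M hVm hVM hmeas
    apply Integrable.mono' (g := fun s => |g₁ s 0| + C * M)
      (hg₁0.abs.add (integrableOn_const measure_Icc_lt_top.ne))
      hmeas.aestronglyMeasurable
    filter_upwards [self_mem_ae_restrict (measurableSet_Icc : MeasurableSet (Icc (0:ℝ) T))]
      with s hs
    have hlip := hg₁lip s hs (V s) 0
    rw [sub_zero] at hlip
    have h1 : |g₁ s (V s)| - |g₁ s 0| ≤ |g₁ s (V s) - g₁ s 0| :=
      abs_sub_abs_le_abs_sub _ _
    have h2 : C * |V s| ≤ C * M := mul_le_mul_of_nonneg_left (hVM s) hC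
    simp only [Real.norm_eq_abs]
    linarith
  have int₁₁ : IntegrableOn (fun s => g₁ s (V₁ s)) (Icc 0 T) :=
    intaux V₁ M₁ hV₁m hM₁ meas₁₁
  have int₁₂ : IntegrableOn (fun s => g₁ s (V₂ s)) (Icc 0 T) :=
    intaux V₂ M₂ hV₂m hM₂ meas₁₂
  have δint : IntegrableOn (fun s => |g₁ s (V₂ s) - g₂ s (V₂ s)|) (Icc 0 T) :=
    (int₁₂.sub hint).abs
  set D : ℝ := ∫ s in Icc (0 : ℝ) T, |g₁ s (V₂ s) - g₂ s (V₂ s)| with hDdef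
  have hD0 : 0 ≤ D := integral_nonneg (fun s => abs_nonneg _)
  set S : ℝ := sSup ((fun s => |f₁ s - f₂ s|) '' Icc (0 : ℝ) T) with hSdef
  have hSbdd : BddAbove ((fun s => |f₁ s - f₂ s|) '' Icc (0 : ℝ) T) := by
    refine ⟨N₁ + N₂, ?_⟩
    rintro _ ⟨s, _, rfl⟩
    have h := abs_sub (f₁ s) (f₂ s)
    have := hN₁ s; have := hN₂ s
    calc |f₁ s - f₂ s| ≤ |f₁ s| + |f₂ s| := abs_sub _ _
      _ ≤ N₁ + N₂ := add_le_add (hN₁ s) (hN₂ s)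
  have hS : ∀ s ∈ Icc (0:ℝ) T, |f₁ s - f₂ s| ≤ S :=
    fun s hs => le_csSup hSbdd ⟨s, hs, rfl⟩
  have hS0 : 0 ≤ S := (abs_nonneg _).trans (hS 0 ⟨le_rfl, hT.le⟩)
  set u : ℝ → ℝ := fun t => |V₁ t - V₂ t| with hudef
  have hum : Measurable u := (hV₁m.sub hV₂m).abs
  have huM : ∀ t, u t ≤ M₁ + M₂ := by
    intro t
    calc |V₁ t - V₂ t| ≤ |V₁ t| + |V₂ t| := abs_sub _ _
      _ ≤ M₁ + M₂ := add_le_add (hM₁ t) (hM₂ t)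
  have hM12 : 0 ≤ M₁ + M₂ := (abs_nonneg _).trans (huM 0)
  have hui : IntegrableOn u (Icc 0 T) := by
    apply Measure.integrableOn_of_bounded (M := M₁ + M₂)
      (measure_Icc_lt_top.ne) hum.aestronglyMeasurable
    filter_upwards with s
    rw [Real.norm_eq_abs, show |u s| = u s from abs_of_nonneg (abs_nonneg _)]
    exact huM s
  set A : ℝ := |x₁ - x₂| + D + S with hAdef
  have hA0 : 0 ≤ A := by positivity
  have key : ∀ t ∈ Icc (0:ℝ) T, u t ≤ A + C * ∫ s in Icc (0:ℝ) t, u s := by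
    intro t ht
    have hsub : Icc (0:ℝ) t ⊆ Icc (0:ℝ) T := Icc_subset_Icc le_rfl ht.2
    have e : V₁ t - V₂ t
        = (x₁ - x₂) - (∫ s in Icc (0:ℝ) t, (g₁ s (V₁ s) - g₂ s (V₂ s)))
          + (f₁ t - f₂ t) := by
      rw [hV₁eq t ht, hV₂eq t ht,
        MeasureTheory.integral_sub (int₁₁.mono_set hsub) (hint.mono_set hsub)]
      ring
    have habs : |∫ s in Icc (0:ℝ) t, (g₁ s (V₁ s) - g₂ s (V₂ s))|
        ≤ ∫ s in Icc (0:ℝ) t, |g₁ s (V₁ s) - g₂ s (V₂ s)| := by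
      simpa only [Real.norm_eq_abs] using
        norm_integral_le_integral_norm (μ := volume.restrict (Icc (0:ℝ) t))
          (fun s => g₁ s (V₁ s) - g₂ s (V₂ s))
    have hmono : ∫ s in Icc (0:ℝ) t, |g₁ s (V₁ s) - g₂ s (V₂ s)|
        ≤ ∫ s in Icc (0:ℝ) t, (C * u s + |g₁ s (V₂ s) - g₂ s (V₂ s)|) := by
      refine setIntegral_mono_on
        (((int₁₁.mono_set hsub).sub (hint.mono_set hsub)).abs)
        (((hui.mono_set hsub).const_mul C).add (δint.mono_set hsub))
        measurableSet_Icc ?_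
      intro s hs
      have hlip := hg₁lip s (hsub hs) (V₁ s) (V₂ s)
      have htri : |g₁ s (V₁ s) - g₂ s (V₂ s)|
          ≤ |g₁ s (V₁ s) - g₁ s (V₂ s)| + |g₁ s (V₂ s) - g₂ s (V₂ s)| :=
        abs_sub_le _ _ _
      have hus : u s = |V₁ s - V₂ s| := rfl
      rw [hus]
      linarith
    have hadd : ∫ s in Icc (0:ℝ) t, (C * u s + |g₁ s (V₂ s) - g₂ s (V₂ s)|)
        = C * (∫ s in Icc (0:ℝ) t, u s) + ∫ s in Icc (0:ℝ) t, |g₁ s (V₂ s) - g₂ s (V₂ s)| := by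
      rw [MeasureTheory.integral_add ((hui.mono_set hsub).const_mul C) (δint.mono_set hsub),
        MeasureTheory.integral_const_mul]
    have hDle : ∫ s in Icc (0:ℝ) t, |g₁ s (V₂ s) - g₂ s (V₂ s)| ≤ D := by
      rw [hDdef]
      exact setIntegral_mono_set δint
        (Filter.Eventually.of_forall (fun s => abs_nonneg _))
        (HasSubset.Subset.eventuallyLE hsub)
    have hf : |f₁ t - f₂ t| ≤ S := hS t ht
    have hfinal : u t ≤ |x₁ - x₂|
        + |∫ s in Icc (0:ℝ) t, (g₁ s (V₁ s) - g₂ s (V₂ s))| + |f₁ t - f₂ t| := by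
      rw [show u t = |V₁ t - V₂ t| from rfl, e]
      have h1 := abs_add_le (x₁ - x₂ - ∫ s in Icc (0:ℝ) t, (g₁ s (V₁ s) - g₂ s (V₂ s)))
        (f₁ t - f₂ t)
      have h2 := abs_sub (x₁ - x₂) (∫ s in Icc (0:ℝ) t, (g₁ s (V₁ s) - g₂ s (V₂ s)))
      linarith
    rw [hadd] at hmono
    rw [hAdef]
    linarith
  have := gronwall_iter T C A (M₁ + M₂) hC hA0 hM12 u
    (fun t _ => huM t) hui key
  intro t ht
  exact this t ht
end
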